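/- Let n ≥ 0 and let O_{n+1} = { A ∈ GL_{n+1}(ℝ) : Aᵀ A = I } be the orthogonal group, a subgroup of GL_{n+1}(ℝ). Then an invertible matrix B ∈ GL_{n+1}(ℝ) lies in the normalizer N(O_{n+1}) of O_{n+1} in GL_{n+1}(ℝ) if and only if there exists a real number r > 0 with Bᵀ B = r·I. -/

import Mathlib

open Matrix

/-- The orthogonal group `O_{n+1} = { A ∈ GL_{n+1}(ℝ) : Aᵀ A = I }` as a
subgroup of `GL_{n+1}(ℝ)`. -/
def OGroup (n : ℕ) : Subgroup (GL (Fin (n + 1)) ℝ) where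
  carrier := {A | (A : Matrix (Fin (n + 1)) (Fin (n + 1)) ℝ)ᵀ *
    (A : Matrix (Fin (n + 1)) (Fin (n + 1)) ℝ) = 1}
  one_mem' := by simp
  mul_mem' := by
    intro a b ha hb
    simp only [Set.mem_setOf_eq] at *
    set M := (a : Matrix (Fin (n + 1)) (Fin (n + 1)) ℝ)
    set N := (b : Matrix (Fin (n + 1)) (Fin (n + 1)) ℝ)
    have : ((a * b : GL (Fin (n + 1)) ℝ) : Matrix (Fin (n + 1)) (Fin (n + 1)) ℝ)
        = M * N := rfl
    rw [this, Matrix.transpose_mul]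
    calc Nᵀ * Mᵀ * (M * N) = Nᵀ * (Mᵀ * M) * N := by noncomm_ring
      _ = Nᵀ * N := by rw [ha, mul_one]
      _ = 1 := hb
  inv_mem' := by
    intro a ha
    simp only [Set.mem_setOf_eq] at *
    set M := (a : Matrix (Fin (n + 1)) (Fin (n + 1)) ℝ)
    set N := ((a⁻¹ : GL (Fin (n + 1)) ℝ) : Matrix (Fin (n + 1)) (Fin (n + 1)) ℝ)
    have hMN : M * N = 1 := a.mul_inv
    have hNM : N * M = 1 := a.inv_mul
    -- from `Mᵀ M = 1` and invertibility, `N = Mᵀ`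
    have hN : N = Mᵀ := by
      calc N = (Mᵀ * M) * N := by rw [ha, one_mul]
        _ = Mᵀ * (M * N) := by rw [mul_assoc]
        _ = Mᵀ := by rw [hMN, mul_one]
    rw [hN, Matrix.transpose_transpose]
    calc M * Mᵀ = M * N := by rw [hN]
      _ = 1 := hMN


section Aux

variable {n : ℕ}

private abbrev MatN (n : ℕ) := Matrix (Fin (n + 1)) (Fin (n + 1)) ℝ

/-- Build a `GL` element from an involutive matrix. -/
private def glOf (M : MatN n) (h : M * M = 1) : GL (Fin (n + 1)) ℝ := ⟨M, M, h, h⟩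

private lemma mem_OGroup_iff {A : GL (Fin (n + 1)) ℝ} :
    A ∈ OGroup n ↔ (A : MatN n)ᵀ * (A : MatN n) = 1 := Iff.rfl

private lemma glOf_mem (M : MatN n) (h : M * M = 1) (hsym : Mᵀ = M) :
    glOf M h ∈ OGroup n := by
  rw [mem_OGroup_iff]
  show Mᵀ * M = 1
  rw [hsym, h]

/-- If `Bᵀ B = r • 1` with `r ≠ 0`, then `(B⁻¹)ᵀ B⁻¹ = r⁻¹ • 1`. -/
private lemma inv_conf (B : GL (Fin (n + 1)) ℝ) (r : ℝ) (hr : r ≠ 0)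
    (hB : (B : MatN n)ᵀ * (B : MatN n) = r • 1) :
    ((B⁻¹ : GL (Fin (n + 1)) ℝ) : MatN n)ᵀ *
      ((B⁻¹ : GL (Fin (n + 1)) ℝ) : MatN n) = r⁻¹ • 1 := by
  set Bm := (B : MatN n) with hBm
  set Bi := ((B⁻¹ : GL (Fin (n + 1)) ℝ) : MatN n) with hBi
  have hMN : Bm * Bi = 1 := B.mul_inv
  have hNM : Bi * Bm = 1 := B.inv_mul
  have hBBt : Bm * Bmᵀ = r • 1 := by
    calc Bm * Bmᵀ = Bm * Bmᵀ * (Bm * Bi) := by rw [hMN, mul_one]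
      _ = Bm * (Bmᵀ * Bm) * Bi := by noncomm_ring
      _ = Bm * (r • (1 : MatN n)) * Bi := by rw [hB]
      _ = r • (Bm * Bi) := by rw [Matrix.mul_smul, Matrix.smul_mul, mul_one]
      _ = r • 1 := by rw [hMN]
  have hBiEq : Bi = r⁻¹ • Bmᵀ := by
    have h1 : Bm * (r⁻¹ • Bmᵀ) = 1 := by
      rw [Matrix.mul_smul, hBBt, smul_smul, inv_mul_cancel₀ hr, one_smul]
    calc Bi = Bi * (Bm * (r⁻¹ • Bmᵀ)) := by rw [h1, mul_one]
      _ = (Bi * Bm) * (r⁻¹ • Bmᵀ) := by rw [mul_assoc]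
      _ = r⁻¹ • Bmᵀ := by rw [hNM, one_mul]
  rw [hBiEq, Matrix.transpose_smul, Matrix.transpose_transpose,
    Matrix.smul_mul, Matrix.mul_smul, hBBt, smul_smul, smul_smul]
  congr 1
  field_simp

/-- If `Bᵀ B = r • 1` with `r > 0`, then conjugation by `B` preserves `OGroup n`. -/
private lemma conj_mem (B : GL (Fin (n + 1)) ℝ) (r : ℝ) (hr : 0 < r)
    (hB : (B : MatN n)ᵀ * (B : MatN n) = r • 1)
    {A : GL (Fin (n + 1)) ℝ} (hA : A ∈ OGroup n) :
    B * A * B⁻¹ ∈ OGroup n := by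
  rw [mem_OGroup_iff] at hA ⊢
  set Bm := (B : MatN n) with hBm
  set Bi := ((B⁻¹ : GL (Fin (n + 1)) ℝ) : MatN n) with hBi
  set Am := (A : MatN n) with hAm
  have hBiBi : Biᵀ * Bi = r⁻¹ • 1 := inv_conf B r hr.ne' hB
  have hcoe : ((B * A * B⁻¹ : GL (Fin (n + 1)) ℝ) : MatN n) = Bm * Am * Bi := rfl
  rw [hcoe]
  calc (Bm * Am * Bi)ᵀ * (Bm * Am * Bi)
      = Biᵀ * (Amᵀ * (Bmᵀ * Bm) * Am) * Bi := by
        simp only [Matrix.transpose_mul]; noncomm_ring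
    _ = Biᵀ * (Amᵀ * (r • (1 : MatN n)) * Am) * Bi := by rw [hB]
    _ = r • (Biᵀ * (Amᵀ * Am) * Bi) := by
        rw [Matrix.mul_smul, Matrix.smul_mul, Matrix.mul_smul, Matrix.smul_mul,
          mul_one]
    _ = r • (Biᵀ * Bi) := by rw [hA, mul_one]
    _ = r • (r⁻¹ • (1 : MatN n)) := by rw [hBiBi]
    _ = 1 := by rw [smul_smul, mul_inv_cancel₀ hr.ne', one_smul]

end Aux

/-- Characterization of the normalizer of the orthogonal group (paper's Lemma
6.6, after Sirola): `B ∈ N(O_{n+1})` iff `Bᵀ B = r·I` for some `r > 0`. -/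
theorem mem_normalizer_orthogonal_iff (n : ℕ) (B : GL (Fin (n + 1)) ℝ) :
    B ∈ Subgroup.normalizer (OGroup n : Set (GL (Fin (n + 1)) ℝ)) ↔
      ∃ r : ℝ, 0 < r ∧
        (B : Matrix (Fin (n + 1)) (Fin (n + 1)) ℝ)ᵀ *
          (B : Matrix (Fin (n + 1)) (Fin (n + 1)) ℝ) = r • (1 : Matrix (Fin (n + 1)) (Fin (n + 1)) ℝ) := by
  constructor
  · intro hBnorm
    rw [Subgroup.mem_normalizer_iff] at hBnorm
    set Bm := (B : MatN n) with hBm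
    set S := Bmᵀ * Bm with hS
    -- Step 1: S commutes with every symmetric involutive orthogonal matrix
    have key : ∀ M : MatN n, (hM : M * M = 1) → Mᵀ = M → S * M = M * S := by
      intro M hM hsym
      have h2 : B * glOf M hM * B⁻¹ ∈ OGroup n :=
        (hBnorm (glOf M hM)).mp (glOf_mem M hM hsym)
      rw [mem_OGroup_iff] at h2
      set Bi := ((B⁻¹ : GL (Fin (n + 1)) ℝ) : MatN n) with hBi
      have hcoe : ((B * glOf M hM * B⁻¹ : GL (Fin (n + 1)) ℝ) : MatN n)
          = Bm * M * Bi := rfl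
      rw [hcoe] at h2
      have hMN : Bm * Bi = 1 := B.mul_inv
      have hNM : Bi * Bm = 1 := B.inv_mul
      have e1 : Bmᵀ * Biᵀ = 1 := by
        rw [← Matrix.transpose_mul, hNM, Matrix.transpose_one]
      have e2 : Biᵀ * Bmᵀ = 1 := by
        rw [← Matrix.transpose_mul, hMN, Matrix.transpose_one]
      have h3 : M * S * M = S := by
        calc M * S * M
            = (Bmᵀ * Biᵀ) * (Mᵀ * (Bmᵀ * Bm) * M) * (Bi * Bm) := by
              rw [e1, hNM, hsym, hS]; noncomm_ring
          _ = Bmᵀ * ((Bm * M * Bi)ᵀ * (Bm * M * Bi)) * Bm := by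
              simp only [Matrix.transpose_mul]; noncomm_ring
          _ = Bmᵀ * (1 : MatN n) * Bm := by rw [h2]
          _ = S := by rw [mul_one]
      calc S * M = (M * M) * S * M := by rw [hM, one_mul]
        _ = M * (M * S * M) := by noncomm_ring
        _ = M * S := by rw [h3]
    -- Step 2: off-diagonal entries of S vanish
    have hoff : ∀ i j : Fin (n + 1), i ≠ j → S i j = 0 := by
      intro i j hij
      set d : Fin (n + 1) → ℝ := fun k => if k = j then -1 else 1 with hd
      have hdd : Matrix.diagonal d * Matrix.diagonal d = 1 := by
        have hfun : (fun k => d k * d k) = fun _ => (1 : ℝ) := by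
          funext k
          by_cases h : k = j <;> simp [hd, h]
        rw [Matrix.diagonal_mul_diagonal, hfun, Matrix.diagonal_one]
      have hc := key _ hdd (Matrix.diagonal_transpose d)
      have h1 := congrFun (congrFun hc i) j
      rw [Matrix.mul_diagonal, Matrix.diagonal_mul] at h1
      simp only [hd, if_pos rfl, if_neg hij] at h1
      linarith
    -- Step 3: all diagonal entries of S are equal (via swap matrices)
    have hdiag : ∀ i j : Fin (n + 1), S i i = S j j := by
      intro i j
      set σ := Equiv.swap i j with hσdef
      set P : MatN n := Matrix.of (fun a b => if a = σ b then (1 : ℝ) else 0) with hP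
      have hPP : P * P = 1 := by
        funext a b
        rw [Matrix.mul_apply]
        simp only [hP, Matrix.of_apply, Matrix.one_apply]
        rw [Finset.sum_eq_single (σ b)]
        · by_cases h : a = b
          · rw [if_pos (by rw [h, Equiv.swap_apply_self]), if_pos rfl, one_mul,
              if_pos h]
          · rw [if_neg (fun hh => h (by rw [hh, Equiv.swap_apply_self])),
              zero_mul, if_neg h]
        · intro k _ hk
          rw [if_neg (fun hh : k = σ b => hk hh), mul_zero]
        · simp
      have hPt : Pᵀ = P := by
        funext a b
        simp only [Matrix.transpose_apply, hP, Matrix.of_apply]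
        congr 1
        simp only [eq_iff_iff]
        constructor
        · intro h; rw [h, Equiv.swap_apply_self]
        · intro h; rw [h, Equiv.swap_apply_self]
      have hc := key P hPP hPt
      have h1 := congrFun (congrFun hc i) j
      rw [Matrix.mul_apply, Matrix.mul_apply] at h1
      have hl : ∑ k, S i k * P k j = S i i := by
        rw [Finset.sum_eq_single (σ j)]
        · rw [hP]
          simp [Matrix.of_apply, hσdef, Equiv.swap_apply_right]
        · intro k _ hk
          rw [hP]
          simp only [Matrix.of_apply]
          rw [if_neg (fun hh : k = σ j => hk hh), mul_zero]
        · simp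
      have hr : ∑ k, P i k * S k j = S j j := by
        rw [Finset.sum_eq_single (σ i)]
        · rw [hP]
          simp [Matrix.of_apply, hσdef, Equiv.swap_apply_left,
            Equiv.swap_apply_right]
        · intro k _ hk
          rw [hP]
          simp only [Matrix.of_apply]
          rw [if_neg (fun hh : i = σ k => hk (by rw [hh, Equiv.swap_apply_self])),
            zero_mul]
        · simp
      rw [hl, hr] at h1
      exact h1
    -- Step 4: conclude S = r • 1 with r > 0
    set r := S 0 0 with hrdef
    have hSr : S = r • (1 : MatN n) := by
      funext i j
      by_cases h : i = j
      · subst h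
        rw [hdiag i 0]
        simp [Matrix.one_apply, hrdef]
      · rw [hoff i j h]
        simp [Matrix.one_apply, h]
    have hrne : r ≠ 0 := by
      intro h0
      have hBi : ((B⁻¹ : GL (Fin (n + 1)) ℝ) : MatN n)ᵀ * S *
          ((B⁻¹ : GL (Fin (n + 1)) ℝ) : MatN n) = 1 := by
        set Bi := ((B⁻¹ : GL (Fin (n + 1)) ℝ) : MatN n) with hBidef
        have hMN : Bm * Bi = 1 := B.mul_inv
        calc Biᵀ * (Bmᵀ * Bm) * Bi = (Bm * Bi)ᵀ * (Bm * Bi) := by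
              simp only [Matrix.transpose_mul]; noncomm_ring
          _ = 1 := by rw [hMN]; simp
      rw [hSr, h0, zero_smul] at hBi
      simp only [mul_zero, zero_mul] at hBi
      exact one_ne_zero hBi.symm
    have hrnonneg : 0 ≤ r := by
      have : r = ∑ k, Bm k 0 * Bm k 0 := by
        rw [hrdef, hS, Matrix.mul_apply]
        simp [Matrix.transpose_apply]
      rw [this]
      exact Finset.sum_nonneg fun k _ => mul_self_nonneg _
    exact ⟨r, lt_of_le_of_ne hrnonneg (Ne.symm hrne), hSr⟩
  · rintro ⟨r, hr, hB⟩
    rw [Subgroup.mem_normalizer_iff]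
    intro A
    constructor
    · intro hA
      exact conj_mem B r hr hB hA
    · intro hA
      have hBinv : ((B⁻¹ : GL (Fin (n + 1)) ℝ) : MatN n)ᵀ *
          ((B⁻¹ : GL (Fin (n + 1)) ℝ) : MatN n) = r⁻¹ • 1 :=
        inv_conf B r hr.ne' hB
      have h2 := conj_mem B⁻¹ r⁻¹ (by positivity) hBinv hA
      have heq : B⁻¹ * (B * A * B⁻¹) * B⁻¹⁻¹ = A := by group
      rwa [heq] at h2
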